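/- The single-step version of the implicit scheme estimate: if (y^{n+1} − y^n)/τ + A y^{n+1} = f^n with A self-adjoint positive semidefinite, then ⟨A y^{n+1}, y^{n+1}⟩ ≤ ⟨A y^n, y^n⟩ + (τ/2) ‖f^n‖². -/

import Mathlib

open scoped RealInnerProductSpace

/-- Single-step energy estimate for the implicit Euler scheme. -/
theorem stmt_2
    {U : Type*} [NormedAddCommGroup U] [InnerProductSpace ℝ U] [FiniteDimensional ℝ U]
    (A : U →ₗ[ℝ] U)
    (hAsym : ∀ x y : U, ⟪A x, y⟫ = ⟪x, A y⟫)
    (hApos : ∀ x : U, 0 ≤ ⟪A x, x⟫)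
    (τ : ℝ) (hτ : 0 < τ)
    (yn ynp f : U)
    (hscheme : (1/τ) • (ynp - yn) + A ynp = f) :
    ⟪A ynp, ynp⟫ ≤ ⟪A yn, yn⟫ + (τ/2) * ‖f‖^2 := by
  set d := ynp - yn with hd
  have hA : A ynp = f - (1/τ) • d := by
    rw [eq_sub_iff_add_eq, add_comm]; exact hscheme
  have hs : ⟪A yn, ynp⟫ = ⟪A ynp, yn⟫ := by
    rw [hAsym, real_inner_comm]
  have h1 : ⟪A ynp, ynp⟫ - ⟪A yn, yn⟫ + ⟪A d, d⟫ = 2 * ⟪A ynp, d⟫ := by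
    simp only [hd, map_sub, inner_sub_left, inner_sub_right]
    linarith
  have h2 : ⟪A ynp, d⟫ = ⟪f, d⟫ - (1/τ) * ‖d‖^2 := by
    rw [hA, inner_sub_left, real_inner_smul_left, real_inner_self_eq_norm_sq]
  have h2' : τ * ⟪A ynp, d⟫ = τ * ⟪f, d⟫ - ‖d‖^2 := by
    rw [h2]; field_simp
  have h3 : ⟪f, d⟫ ≤ ‖f‖ * ‖d‖ := real_inner_le_norm f d
  have h4 : 0 ≤ ⟪A d, d⟫ := hApos d
  nlinarith [sq_nonneg (2 * ‖d‖ - τ * ‖f‖), hτ, h1, h2', h4,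
    mul_le_mul_of_nonneg_left h3 hτ.le]
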